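/- Let G = ⟨ρ₀, ρ₁⟩ be a permutation group on a finite set Ω where ρ₀, ρ₁ are involutions. If G has at least one orbit of size 3 and no orbit of size greater than 3, then G is isomorphic to S₃ (≅ D₆) or to C₂ × S₃ (≅ D₁₂). -/

import Mathlib

open Equiv MulAction Subgroup

lemma aux_three {α : Type*} {s : Set α} (hfin : s.Finite) (hs : Nat.card s ≤ 2)
    {u v w : α} (hu : u ∈ s) (hv : v ∈ s) (hw : w ∈ s) : u = v ∨ u = w ∨ v = w := by
  by_contra h
  push_neg at h
  obtain ⟨h1, h2, h3⟩ := h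
  have hsub : ({u, v, w} : Set α) ⊆ s := by
    intro a ha; rcases ha with rfl | rfl | rfl <;> assumption
  have hcard : ({u, v, w} : Set α).ncard = 3 := by
    rw [Set.ncard_insert_of_notMem (by simp [h1, h2]), Set.ncard_insert_of_notMem (by simp [h3]),
      Set.ncard_singleton]
  have := Set.ncard_le_ncard hsub hfin
  rw [hcard, ← Nat.card_coe_set_eq] at this
  omega

-- permCongr as MulEquiv

def permCongrMulEquiv {α β : Type*} (e : α ≃ β) : Perm α ≃* Perm β :=
  { Equiv.permCongr e with
    map_mul' := fun p q => by
      ext x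
      simp [Equiv.permCongr_apply, Equiv.Perm.mul_apply] }


lemma mem0 {Ω : Type*} {ρ₀ ρ₁ : Equiv.Perm Ω} {G : Subgroup (Equiv.Perm Ω)}
    (hG : G = Subgroup.closure {ρ₀, ρ₁}) : ρ₀ ∈ G :=
  hG ▸ Subgroup.subset_closure (by simp)


lemma mem1 {Ω : Type*} {ρ₀ ρ₁ : Equiv.Perm Ω} {G : Subgroup (Equiv.Perm Ω)}
    (hG : G = Subgroup.closure {ρ₀, ρ₁}) : ρ₁ ∈ G :=
  hG ▸ Subgroup.subset_closure (by simp)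


lemma gen_top {Ω : Type*} {ρ₀ ρ₁ : Equiv.Perm Ω} {G : Subgroup (Equiv.Perm Ω)}
    (hG : G = Subgroup.closure {ρ₀, ρ₁}) :
    Subgroup.closure {(⟨ρ₀, mem0 hG⟩ : G), ⟨ρ₁, mem1 hG⟩} = ⊤ := by
  apply Subgroup.map_injective G.subtype_injective
  rw [MonoidHom.map_closure, ← MonoidHom.range_eq_map, Subgroup.range_subtype,
    Set.image_insert_eq, Set.image_singleton]
  exact hG.symm


lemma range_eq {Ω : Type*} {ρ₀ ρ₁ : Equiv.Perm Ω} {G : Subgroup (Equiv.Perm Ω)}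
    (hG : G = Subgroup.closure {ρ₀, ρ₁}) {H : Type*} [Group H] (φ : G →* H) :
    φ.range = Subgroup.closure {φ ⟨ρ₀, mem0 hG⟩, φ ⟨ρ₁, mem1 hG⟩} := by
  rw [MonoidHom.range_eq_map, ← gen_top hG, MonoidHom.map_closure,
    Set.image_insert_eq, Set.image_singleton]


lemma surj_aux {Ω : Type*} [Fintype Ω] {ρ₀ ρ₁ : Equiv.Perm Ω}
    (h0 : ρ₀ ^ 2 = 1) (h1 : ρ₁ ^ 2 = 1) {G : Subgroup (Equiv.Perm Ω)}
    (hG : G = Subgroup.closure {ρ₀, ρ₁}) (x : Ω)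
    (hx : Nat.card (MulAction.orbit G x) = 3) :
    Function.Surjective (MulAction.toPermHom G (MulAction.orbit G x)) := by
  classical
  set O := MulAction.orbit G x with hO
  haveI : Fintype O := Fintype.ofFinite _
  have hcardO : Fintype.card O = 3 := by rw [← Nat.card_eq_fintype_card]; exact hx
  set f := MulAction.toPermHom G O with hf
  set T := f.range with hT
  -- card of Perm O
  have hcardP : Nat.card (Perm O) = 6 := by
    rw [Nat.card_eq_fintype_card, Fintype.card_perm, hcardO]; rfl
  -- generators
  have hr02 : (⟨ρ₀, mem0 hG⟩ : G) ^ 2 = 1 := by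
    apply Subtype.ext; simpa using h0
  have hr12 : (⟨ρ₁, mem1 hG⟩ : G) ^ 2 = 1 := by
    apply Subtype.ext; simpa using h1
  set a := f ⟨ρ₀, mem0 hG⟩ with hadef
  set b := f ⟨ρ₁, mem1 hG⟩ with hbdef
  have ha2 : a ^ 2 = 1 := by rw [hadef, ← map_pow, hr02, map_one]
  have hb2 : b ^ 2 = 1 := by rw [hbdef, ← map_pow, hr12, map_one]
  -- f g applied
  have happ : ∀ (g : G) (y : O), f g y = g • y := fun g y => rfl
  -- transitivity
  have htrans : ∀ y z : O, ∃ g : G, f g y = z := by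
    intro y z
    obtain ⟨g, hg⟩ := MulAction.exists_smul_eq G y z
    exact ⟨g, hg⟩
  -- distinct points
  let e : O ≃ Fin 3 := Fintype.equivFinOfCardEq hcardO
  have hne : e.symm 0 ≠ e.symm 1 := by simp [e]
  -- nontrivial generator
  have hab : ¬ (a = 1 ∧ b = 1) := by
    rintro ⟨haa, hbb⟩
    have hbot : T = ⊥ := by
      rw [hT, range_eq hG f, ← hadef, ← hbdef, haa, hbb]
      simp
    obtain ⟨g, hg⟩ := htrans (e.symm 0) (e.symm 1)
    have : f g = 1 := by
      have : f g ∈ T := ⟨g, rfl⟩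
      rwa [hbot, Subgroup.mem_bot] at this
    rw [this] at hg
    exact hne (by set_option linter.unnecessarySimpa false in simpa using hg)
  -- 2 dvd card T
  haveI : Fintype T := Fintype.ofFinite _
  have h2 : 2 ∣ Nat.card T := by
    obtain ⟨c, hcmem, hc2, hcne⟩ : ∃ c, c ∈ T ∧ c ^ 2 = 1 ∧ c ≠ 1 := by
      rcases Classical.em (a = 1) with haa | haa
      · refine ⟨b, ⟨_, rfl⟩, hb2, ?_⟩
        intro hbb; exact hab ⟨haa, hbb⟩
      · exact ⟨a, ⟨_, rfl⟩, ha2, haa⟩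
    have hord : orderOf (⟨c, hcmem⟩ : T) = 2 := by
      apply orderOf_eq_prime
      · apply Subtype.ext; simpa using hc2
      · intro h; exact hcne (by simpa using congrArg (Subtype.val) h)
    rw [← hord, Nat.card_eq_fintype_card]
    exact orderOf_dvd_card
  -- 3 dvd card T
  have h3 : 3 ∣ Nat.card T := by
    have horbT : MulAction.orbit T (e.symm 0) = Set.univ := by
      apply Set.eq_univ_of_forall
      intro z
      obtain ⟨g, hg⟩ := htrans (e.symm 0) z
      exact ⟨⟨f g, ⟨g, rfl⟩⟩, hg⟩
    haveI : Fintype (MulAction.orbit T (e.symm 0)) := Fintype.ofFinite _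
    have hcard_orb : Fintype.card (MulAction.orbit T (e.symm 0)) = 3 :=
      (Fintype.card_congr (Equiv.setCongr horbT |>.trans (Equiv.Set.univ O))).trans hcardO
    have := MulAction.card_orbit_mul_card_stabilizer_eq_card_group T (e.symm 0)
    rw [hcard_orb] at this
    rw [Nat.card_eq_fintype_card, ← this]
    exact Dvd.intro _ rfl
  have h6 : (6 : ℕ) ∣ Nat.card T := Nat.Coprime.mul_dvd_of_dvd_of_dvd (by norm_num) h2 h3
  have hTdvd : Nat.card T ∣ 6 := hcardP ▸ Subgroup.card_subgroup_dvd_card T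
  have hT6 : Nat.card T = 6 := Nat.dvd_antisymm hTdvd h6
  have : T = ⊤ := Subgroup.eq_top_of_card_eq T (by rw [hT6, hcardP])
  rw [← MonoidHom.range_eq_top]
  exact this


lemma fix2_aux {Ω : Type*} [Fintype Ω] {ρ₀ ρ₁ : Equiv.Perm Ω}
    (h0 : ρ₀ ^ 2 = 1) (h1 : ρ₁ ^ 2 = 1) {G : Subgroup (Equiv.Perm Ω)}
    (hG : G = Subgroup.closure {ρ₀, ρ₁}) (x : Ω)
    (hle2 : Nat.card (MulAction.orbit G x) ≤ 2) :
    ρ₀ (ρ₁ (ρ₀ (ρ₁ x))) = x := by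
  classical
  set O := MulAction.orbit G x with hO
  have hfin : O.Finite := Set.toFinite _
  have hi0 : ∀ a, ρ₀ (ρ₀ a) = a := by
    intro a
    have := Equiv.ext_iff.mp h0 a
    simpa [pow_two] using this
  have hi1 : ∀ a, ρ₁ (ρ₁ a) = a := by
    intro a
    have := Equiv.ext_iff.mp h1 a
    simpa [pow_two] using this
  have hsm0 : ∀ y, y ∈ O → ρ₀ y ∈ O := by
    intro y hy
    exact MulAction.mapsTo_smul_orbit (⟨ρ₀, mem0 hG⟩ : G) x hy
  have hsm1 : ∀ y, y ∈ O → ρ₁ y ∈ O := by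
    intro y hy
    exact MulAction.mapsTo_smul_orbit (⟨ρ₁, mem1 hG⟩ : G) x hy
  have htwo : ∀ u v w : Ω, u ∈ O → v ∈ O → w ∈ O → u = v ∨ u = w ∨ v = w :=
    fun u v w hu hv hw => aux_three hfin hle2 hu hv hw
  have hxO : x ∈ O := MulAction.mem_orbit_self x
  have hyO : ρ₁ x ∈ O := hsm1 x hxO
  have hzO : ρ₀ (ρ₁ x) ∈ O := hsm0 _ hyO
  -- main case analysis
  rcases htwo x (ρ₁ x) (ρ₀ (ρ₁ x)) hxO hyO hzO with hc1 | hc2 | hc3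
  · -- ρ₁ x = x
    rw [← hc1]
    -- goal: ρ₀ (ρ₁ (ρ₀ x)) = x
    have hx0O : ρ₀ x ∈ O := hsm0 x hxO
    rcases htwo x (ρ₀ x) (ρ₁ (ρ₀ x)) hxO hx0O (hsm1 _ hx0O) with hd1 | hd2 | hd3
    · rw [← hd1, ← hc1, ← hd1]
    · -- x = ρ₁ (ρ₀ x) : then ρ₁ x = ρ₀ x, with ρ₁ x = x gives ρ₀ x = x
      have : ρ₁ x = ρ₀ x := by
        have := congrArg ρ₁ hd2
        rwa [hi1] at this
      rw [← this, hi1, ← this, ← hc1]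
    · rw [← hd3, hi0]
  · -- x = ρ₀ (ρ₁ x)
    rw [← hc2, ← hc2]
  · -- ρ₁ x = ρ₀ (ρ₁ x)
    rw [← hc3, hi1]
    -- goal: ρ₀ x = x
    by_cases hxy : x = ρ₁ x
    · rw [← hxy] at hc3
      exact hc3.symm
    · have hx0O : ρ₀ x ∈ O := hsm0 x hxO
      rcases htwo x (ρ₀ x) (ρ₁ x) hxO hx0O hyO with he1 | he2 | he3
      · exact he1.symm
      · exact absurd he2 hxy
      · -- ρ₀ x = ρ₁ x, and ρ₀ (ρ₁ x) = ρ₁ x ⇒ x = ρ₁ x contra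
        exfalso
        apply hxy
        have := congrArg ρ₀ he3
        rw [hi0, ← hc3] at this
        exact this



lemma ord3_aux {Ω : Type*} [Fintype Ω] {ρ₀ ρ₁ : Equiv.Perm Ω}
    (h0 : ρ₀ ^ 2 = 1) (h1 : ρ₁ ^ 2 = 1) {G : Subgroup (Equiv.Perm Ω)}
    (hG : G = Subgroup.closure {ρ₀, ρ₁}) (x : Ω)
    (hx : Nat.card (MulAction.orbit G x) = 3) :
    orderOf ((MulAction.toPermHom G (MulAction.orbit G x))
      ⟨ρ₀ * ρ₁, mul_mem (mem0 hG) (mem1 hG)⟩) = 3 := by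
  classical
  set O := MulAction.orbit G x with hO
  haveI : Fintype O := Fintype.ofFinite _
  have hcardO : Fintype.card O = 3 := by rw [← Nat.card_eq_fintype_card]; exact hx
  set f := MulAction.toPermHom G O with hf
  have hcardP : Nat.card (Perm O) = 6 := by
    rw [Nat.card_eq_fintype_card, Fintype.card_perm, hcardO]; rfl
  set a := f ⟨ρ₀, mem0 hG⟩ with hadef
  set b := f ⟨ρ₁, mem1 hG⟩ with hbdef
  have hfab : f ⟨ρ₀ * ρ₁, mul_mem (mem0 hG) (mem1 hG)⟩ = a * b := by
    rw [hadef, hbdef, ← map_mul]; rfl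
  have ha2 : a ^ 2 = 1 := by
    rw [hadef, ← map_pow]
    have : (⟨ρ₀, mem0 hG⟩ : G) ^ 2 = 1 := by apply Subtype.ext; simpa using h0
    rw [this, map_one]
  have hb2 : b ^ 2 = 1 := by
    rw [hbdef, ← map_pow]
    have : (⟨ρ₁, mem1 hG⟩ : G) ^ 2 = 1 := by apply Subtype.ext; simpa using h1
    rw [this, map_one]
  have hainv : a⁻¹ = a := by
    rw [← mul_eq_one_iff_inv_eq]
    simpa [pow_two] using ha2
  have hbinv : b⁻¹ = b := by
    rw [← mul_eq_one_iff_inv_eq]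
    simpa [pow_two] using hb2
  have hsurj := surj_aux h0 h1 hG x hx
  have htop : f.range = ⊤ := MonoidHom.range_eq_top.mpr hsurj
  have hclos : Subgroup.closure {a, b} = (⊤ : Subgroup (Perm O)) := by
    rw [← htop, range_eq hG f]
  -- noncommuting witnesses
  let e : O ≃ Fin 3 := Fintype.equivFinOfCardEq hcardO
  set p := e.symm 0
  set q := e.symm 1
  set r := e.symm 2
  have hpq : p ≠ q := by simp [p, q, e]
  have hpr : p ≠ r := by simp [p, r, e]
  have hqr : q ≠ r := by simp [q, r, e]
  have hnc : ¬ Commute (Equiv.swap p q) (Equiv.swap p r) := by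
    intro hcomm
    have h := Equiv.ext_iff.mp hcomm r
    simp only [Equiv.Perm.mul_apply] at h
    rw [Equiv.swap_apply_right, Equiv.swap_apply_left,
      Equiv.swap_apply_of_ne_of_ne hpr.symm hqr.symm, Equiv.swap_apply_right] at h
    exact hpq h.symm
  have hCab : ¬ Commute a b := by
    intro hcomm
    have hall : ∀ u v : Perm O, Commute u v := by
      intro u v
      have hu : u ∈ Subgroup.closure ({a, b} : Set (Perm O)) := by rw [hclos]; trivial
      have hv : v ∈ Subgroup.closure ({a, b} : Set (Perm O)) := by rw [hclos]; trivial
      induction hu, hv using Subgroup.closure_induction₂ with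
      | mem x y hx hy =>
        rcases hx with rfl | rfl <;> rcases hy with rfl | rfl
        · exact Commute.refl _
        · exact hcomm
        · exact hcomm.symm
        · exact Commute.refl _
      | one_left y hy => exact Commute.one_left _
      | one_right x hx => exact Commute.one_right _
      | mul_left x y z hx hy hz h1 h2 => exact h1.mul_left h2
      | mul_right x y z hx hy hz h1 h2 => exact h1.mul_right h2
      | inv_left x y hx hy h => exact h.inv_left
      | inv_right x y hx hy h => exact h.inv_right
    exact hnc (hall _ _)
  have hdvd : orderOf (a * b) ∣ 6 := by
    rw [← hcardP, Nat.card_eq_fintype_card]; exact orderOf_dvd_card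
  have hpos : 0 < orderOf (a * b) := orderOf_pos _
  have hle6 : orderOf (a * b) ≤ 6 := Nat.le_of_dvd (by norm_num) hdvd
  rw [hfab]
  set n := orderOf (a * b) with hn
  interval_cases n
  · exfalso
    apply hCab
    have hab1 : a * b = 1 := orderOf_eq_one_iff.mp hn.symm
    have hba : b = a := ((inv_eq_of_mul_eq_one_right hab1).symm).trans hainv
    rw [hba]
  · exfalso
    apply hCab
    have h2 : (a * b) ^ 2 = 1 := by rw [hn]; exact pow_orderOf_eq_one _
    have : a * b = (a * b)⁻¹ := by
      rw [← mul_eq_one_iff_eq_inv]; simpa [pow_two] using h2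
    rw [mul_inv_rev, hainv, hbinv] at this
    exact this
  · rfl
  · exfalso; norm_num at hdvd
  · exfalso; norm_num at hdvd
  · exfalso
    apply hCab
    have hzp : Subgroup.zpowers (a * b) = ⊤ := by
      apply Subgroup.eq_top_of_card_eq
      rw [Nat.card_zpowers, ← hn, hcardP]
    have hmem : ∀ u : Perm O, u ∈ Subgroup.zpowers (a * b) := by
      rw [hzp]; intro u; trivial
    obtain ⟨i, hi⟩ := Subgroup.mem_zpowers_iff.mp (hmem a)
    obtain ⟨j, hj⟩ := Subgroup.mem_zpowers_iff.mp (hmem b)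
    have hc := (Commute.refl (a * b)).zpow_zpow i j
    rwa [hi, hj] at hc


theorem dihedral_orbits_le_three {Ω : Type*} [Fintype Ω]
    (ρ₀ ρ₁ : Equiv.Perm Ω)
    (h0 : ρ₀ ^ 2 = 1) (h1 : ρ₁ ^ 2 = 1)
    (G : Subgroup (Equiv.Perm Ω)) (hG : G = Subgroup.closure {ρ₀, ρ₁})
    (horb3 : ∃ x : Ω, Nat.card (MulAction.orbit G x) = 3)
    (hle : ∀ x : Ω, Nat.card (MulAction.orbit G x) ≤ 3) :
    Nonempty (G ≃* Equiv.Perm (Fin 3)) ∨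
      Nonempty (G ≃* Multiplicative (ZMod 2) × Equiv.Perm (Fin 3)) := by
  classical
  obtain ⟨x₀, hx₀⟩ := horb3
  have hρ₀G : ρ₀ ∈ G := mem0 hG
  have hρ₁G : ρ₁ ∈ G := mem1 hG
  set π : Equiv.Perm Ω := ρ₀ * ρ₁ with hπ
  have hπG : π ∈ G := mul_mem hρ₀G hρ₁G
  have h00 : ρ₀ * ρ₀ = 1 := by simpa [pow_two] using h0
  have h11 : ρ₁ * ρ₁ = 1 := by simpa [pow_two] using h1
  have hinv0 : ρ₀⁻¹ = ρ₀ := by rw [← mul_eq_one_iff_inv_eq]; exact h00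
  have hinv1 : ρ₁⁻¹ = ρ₁ := by rw [← mul_eq_one_iff_inv_eq]; exact h11
  -- pointwise fixing on 3-orbits
  have hfix3 : ∀ x : Ω, Nat.card (MulAction.orbit G x) = 3 → (π ^ 3) x = x := by
    intro x hx
    have hord := ord3_aux h0 h1 hG x hx
    have h3 : ((MulAction.toPermHom G (MulAction.orbit G x))
        (⟨π, hπG⟩ ^ 3 : G)) = 1 := by
      rw [map_pow]
      rw [← hord]
      exact pow_orderOf_eq_one _
    have := Equiv.ext_iff.mp h3 ⟨x, MulAction.mem_orbit_self x⟩
    have := congrArg Subtype.val this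
    simpa using this
  -- pointwise fixing on small orbits
  have hfix2 : ∀ x : Ω, Nat.card (MulAction.orbit G x) ≤ 2 → (π ^ 2) x = x := by
    intro x hx
    have := fix2_aux h0 h1 hG x hx
    simpa [hπ, pow_two, Equiv.Perm.mul_apply] using this
  -- pi^6 = 1
  have hπ6 : π ^ 6 = 1 := by
    ext x
    have h63 : (π ^ 6) x = (π ^ 3) ((π ^ 3) x) := by
      rw [show (6 : ℕ) = 3 + 3 from rfl, pow_add]; rfl
    have h62 : (π ^ 6) x = (π ^ 2) ((π ^ 2) ((π ^ 2) x)) := by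
      rw [show (6 : ℕ) = 2 + (2 + 2) from rfl, pow_add, pow_add]; rfl
    rcases Nat.lt_or_ge (Nat.card (MulAction.orbit G x)) 3 with hc | hc
    · have h2 := hfix2 x (by omega)
      simp [h62, h2]
    · have hc3 : Nat.card (MulAction.orbit G x) = 3 := le_antisymm (hle x) hc
      have h3 := hfix3 x hc3
      simp [h63, h3]
  have hπdvd : orderOf π ∣ 6 := orderOf_dvd_of_pow_eq_one hπ6
  -- conjugation relation
  have hrel : ρ₀ * π * ρ₀ = π⁻¹ := by
    rw [hπ, mul_inv_rev, hinv0, hinv1, ← mul_assoc, h00, one_mul]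
  set Z := Subgroup.zpowers π with hZ
  have hconj : ∀ g ∈ Z, ρ₀ * g * ρ₀ ∈ Z := by
    intro g hg
    obtain ⟨i, rfl⟩ := Subgroup.mem_zpowers_iff.mp hg
    have hcast : ρ₀ * π ^ i * ρ₀ = (π⁻¹) ^ i := by
      have := map_zpow (MulAut.conj ρ₀) π i
      simp only [MulAut.conj_apply, hinv0] at this
      rw [this, hrel]
    rw [hcast]
    exact Subgroup.zpow_mem Z (inv_mem (Subgroup.mem_zpowers π)) i
  -- the bounding subgroup
  set T : Subgroup (Equiv.Perm Ω) :=
    { carrier := {g | g ∈ Z ∨ ρ₀ * g ∈ Z}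
      one_mem' := Or.inl (one_mem Z)
      mul_mem' := by
        rintro g h (hg | hg) (hh | hh)
        · exact Or.inl (mul_mem hg hh)
        · refine Or.inr ?_
          have : ρ₀ * (g * h) = (ρ₀ * g * ρ₀) * (ρ₀ * h) := by
            rw [mul_assoc (ρ₀ * g) ρ₀ (ρ₀ * h), ← mul_assoc ρ₀ ρ₀ h, h00, one_mul, mul_assoc]
          rw [this]
          exact mul_mem (hconj g hg) hh
        · refine Or.inr ?_
          rw [← mul_assoc]
          exact mul_mem hg hh
        · refine Or.inl ?_
          have : g * h = (ρ₀ * (ρ₀ * g) * ρ₀) * (ρ₀ * h) := by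
            rw [← mul_assoc ρ₀ ρ₀ g, h00, one_mul,
              mul_assoc g ρ₀ (ρ₀ * h), ← mul_assoc ρ₀ ρ₀ h, h00, one_mul]
          rw [this]
          exact mul_mem (hconj _ hg) hh
      inv_mem' := by
        rintro g (hg | hg)
        · exact Or.inl (inv_mem hg)
        · refine Or.inr ?_
          have hmem : ρ₀ * (ρ₀ * g) * ρ₀ ∈ Z := hconj _ hg
          have heq : ρ₀ * (ρ₀ * g) * ρ₀ = g * ρ₀ := by
            rw [← mul_assoc ρ₀ ρ₀ g, h00, one_mul]
          rw [heq] at hmem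
          have := inv_mem hmem
          rwa [mul_inv_rev, hinv0] at this } with hT
  have hGT : G ≤ T := by
    rw [hG]
    apply (Subgroup.closure_le T).mpr
    rintro g (rfl | rfl)
    · exact Or.inr (by rw [h00]; exact one_mem Z)
    · exact Or.inr (Subgroup.mem_zpowers π)
  -- cardinality bound
  have hcardG : Nat.card G ≤ 2 * orderOf π := by
    have hsub : (G : Set (Equiv.Perm Ω)) ⊆ (Z : Set (Equiv.Perm Ω)) ∪
        (fun g => ρ₀ * g) ⁻¹' (Z : Set (Equiv.Perm Ω)) := fun g hg => hGT hg
    have hpre : ((fun g => ρ₀ * g) ⁻¹' (Z : Set (Equiv.Perm Ω))).ncard =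
        (Z : Set (Equiv.Perm Ω)).ncard := by
      rw [show (fun g => ρ₀ * g) = ⇑(Equiv.mulLeft ρ₀) from rfl,
        ← Equiv.image_symm_eq_preimage (Equiv.mulLeft ρ₀) _]
      exact Set.ncard_image_of_injective _ (Equiv.injective _)
    have hZcard : (Z : Set (Equiv.Perm Ω)).ncard = orderOf π := by
      rw [← Nat.card_coe_set_eq]
      simpa using Nat.card_zpowers π
    calc Nat.card G = (G : Set (Equiv.Perm Ω)).ncard := by
          rw [← Nat.card_coe_set_eq]; rfl
      _ ≤ _ := Set.ncard_le_ncard hsub (Set.toFinite _)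
      _ ≤ (Z : Set (Equiv.Perm Ω)).ncard +
          ((fun g => ρ₀ * g) ⁻¹' (Z : Set (Equiv.Perm Ω))).ncard := Set.ncard_union_le _ _
      _ = 2 * orderOf π := by rw [hpre, hZcard]; ring
  -- the hom to Perm O
  set O := MulAction.orbit G x₀ with hO
  haveI : Fintype O := Fintype.ofFinite _
  have hcardO : Fintype.card O = 3 := by rw [← Nat.card_eq_fintype_card]; exact hx₀
  set f := MulAction.toPermHom G O with hf
  have hsurj : Function.Surjective f := surj_aux h0 h1 hG x₀ hx₀
  have hcardP : Nat.card (Equiv.Perm O) = 6 := by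
    rw [Nat.card_eq_fintype_card, Fintype.card_perm, hcardO]; rfl
  have hordf : orderOf (f ⟨π, hπG⟩) = 3 := ord3_aux h0 h1 hG x₀ hx₀
  have hqcard : Nat.card (G ⧸ f.ker) = 6 :=
    (Nat.card_congr (QuotientGroup.quotientKerEquivOfSurjective f hsurj).toEquiv).trans hcardP
  have hGcard : Nat.card G = 6 * Nat.card f.ker := by
    rw [Subgroup.card_eq_card_quotient_mul_card_subgroup f.ker, hqcard]
  by_cases hπ3 : π ^ 3 = 1
  · -- case S3
    left
    have hπord3 : orderOf π ∣ 3 := orderOf_dvd_of_pow_eq_one hπ3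
    have hle3 : orderOf π ≤ 3 := Nat.le_of_dvd (by norm_num) hπord3
    have hcard6 : Nat.card G ≤ 6 := by omega
    have hkerpos : 0 < Nat.card f.ker := Nat.card_pos
    have hker1 : Nat.card f.ker = 1 := by omega
    have hkerbot : f.ker = ⊥ := Subgroup.card_eq_one.mp hker1
    have hbij : Function.Bijective f := ⟨(MonoidHom.ker_eq_bot_iff f).mp hkerbot, hsurj⟩
    exact ⟨(MulEquiv.ofBijective f hbij).trans
      (permCongrMulEquiv (Fintype.equivFinOfCardEq hcardO))⟩
  · -- case C2 × S3
    right
    have hπ2 : π ^ 2 ≠ 1 := by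
      intro h2
      have hg2 : (⟨π, hπG⟩ : G) ^ 2 = 1 := Subtype.ext (by simpa using h2)
      have : (f ⟨π, hπG⟩) ^ 2 = 1 := by rw [← map_pow, hg2, map_one]
      have := orderOf_dvd_of_pow_eq_one this
      rw [hordf] at this
      norm_num at this
    have hnd2 : ¬ orderOf π ∣ 2 := fun h => hπ2 (orderOf_dvd_iff_pow_eq_one.mp h)
    have hnd3 : ¬ orderOf π ∣ 3 := fun h => hπ3 (orderOf_dvd_iff_pow_eq_one.mp h)
    have hord6 : orderOf π = 6 := by
      have hpos : 1 ≤ orderOf π := orderOf_pos π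
      have hle6 : orderOf π ≤ 6 := Nat.le_of_dvd (by norm_num) hπdvd
      interval_cases h : orderOf π <;> first
        | rfl
        | (exfalso; revert hπdvd hnd2 hnd3; norm_num)
    have hcard12 : Nat.card G ≤ 12 := by omega
    set zg : G := (⟨π, hπG⟩ : G) ^ 3 with hzg
    have hzker : zg ∈ f.ker := by
      rw [MonoidHom.mem_ker, hzg, map_pow, ← hordf]
      exact pow_orderOf_eq_one _
    have hzne : zg ≠ 1 := by
      intro h
      apply hπ3
      have := congrArg Subtype.val h
      rw [hzg] at this
      simpa using this
    haveI : Nontrivial f.ker := ⟨⟨⟨1, one_mem _⟩, ⟨zg, hzker⟩,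
      fun h => hzne (by simpa [Subtype.ext_iff, eq_comm] using h)⟩⟩
    have hker2 : Nat.card f.ker = 2 := by
      have h1lt : 1 < Nat.card f.ker := Finite.one_lt_card_iff_nontrivial.mpr ‹_›
      omega
    have hG12 : Nat.card G = 12 := by omega
    have hkerchar : ∀ k : G, k ∈ f.ker → k = 1 ∨ k = zg := by
      intro k hk
      have hcard' : Nat.card ((f.ker : Set G) : Set G) ≤ 2 := by
        simpa using hker2.le
      rcases aux_three (Set.toFinite _) hcard' hk (one_mem f.ker) hzker with h | h | h
      · exact Or.inl h
      · exact Or.inr h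
      · exact absurd h.symm hzne
    obtain ⟨x₁, hx₁⟩ : ∃ x₁, (π ^ 3) x₁ ≠ x₁ := by
      by_contra h
      push_neg at h
      exact hπ3 (Equiv.ext fun y => by simpa using h y)
    set O' := MulAction.orbit G x₁ with hO'
    have hx₁O' : x₁ ∈ O' := MulAction.mem_orbit_self _
    have hcoe3 : ((⟨π, hπG⟩ ^ 3 : G) : Equiv.Perm Ω) = π ^ 3 := by simp
    have hπ3mem : (π ^ 3) x₁ ∈ O' := by
      have := MulAction.mapsTo_smul_orbit ((⟨π, hπG⟩ : G) ^ 3) x₁ hx₁O'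
      simpa [Subgroup.smul_def, Equiv.Perm.smul_def, hcoe3] using this
    haveI : Nontrivial O' := ⟨⟨⟨x₁, hx₁O'⟩, ⟨(π ^ 3) x₁, hπ3mem⟩,
      fun h => hx₁ (by simpa [Subtype.ext_iff, eq_comm] using h)⟩⟩
    have hO'2 : Nat.card O' = 2 := by
      have h1lt : 1 < Nat.card O' := Finite.one_lt_card_iff_nontrivial.mpr ‹_›
      have hne3 : Nat.card O' ≠ 3 := fun h3 => hx₁ (hfix3 x₁ h3)
      have hle' : Nat.card O' ≤ 3 := hle x₁
      omega
    haveI : Fintype O' := Fintype.ofFinite _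
    have hcardO' : Fintype.card O' = 2 := by rw [← Nat.card_eq_fintype_card]; exact hO'2
    set r := MulAction.toPermHom G O' with hr
    set Φ := r.prod f with hΦ
    have hΦinj : Function.Injective Φ := by
      rw [← MonoidHom.ker_eq_bot_iff]
      rw [eq_bot_iff]
      intro k hk
      rw [MonoidHom.mem_ker] at hk
      have hfk : f k = 1 := congrArg Prod.snd hk
      have hrk : r k = 1 := congrArg Prod.fst hk
      rcases hkerchar k (MonoidHom.mem_ker.mpr hfk) with rfl | rfl
      · exact Subgroup.mem_bot.mpr rfl
      · exfalso
        have := Equiv.ext_iff.mp hrk ⟨x₁, hx₁O'⟩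
        have := congrArg Subtype.val this
        apply hx₁
        exact this
    have hcardP' : Nat.card (Equiv.Perm O') = 2 := by
      rw [Nat.card_eq_fintype_card, Fintype.card_perm, hcardO']; rfl
    have hcardProd : Nat.card (Equiv.Perm O' × Equiv.Perm O) = 12 := by
      rw [Nat.card_prod, hcardP', hcardP]
    have hbij : Function.Bijective Φ :=
      (Nat.bijective_iff_injective_and_card Φ).mpr ⟨hΦinj, by rw [hG12, hcardProd]⟩
    haveI : Fact (Nat.Prime 2) := ⟨by norm_num⟩
    have hcardM : Nat.card (Multiplicative (ZMod 2)) = 2 := by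
      simp [Nat.card_eq_fintype_card]
    exact ⟨(MulEquiv.ofBijective Φ hbij).trans
      (MulEquiv.prodCongr (mulEquivOfPrimeCardEq hcardP' hcardM)
        (permCongrMulEquiv (Fintype.equivFinOfCardEq hcardO)))⟩
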